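/- CCM is invariant under local unitary transformations: if U is an N-qubit local unitary, i.e. U(x,y) = ∏_{j=1}^{N} Uʲ(x j, y j) with each Uʲ a 2×2 unitary matrix, then for every N-qubit state ρ, C(U ρ U†) = C(ρ). -/

import Mathlib

open scoped BigOperators ComplexOrder Matrix

/-- Matrices representing operators on qubits indexed by `ι`. -/
abbrev QMat (ι : Type) : Type := Matrix (ι → Fin 2) (ι → Fin 2) ℂ

/-- A multi-qubit state: positive semidefinite with trace one. -/
def IsState {ι : Type} [Fintype ι] [DecidableEq ι] (ρ : QMat ι) : Prop :=
  ρ.PosSemidef ∧ ρ.trace = 1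

/-- Combine `u : A → Fin 2` with `w : Aᶜ → Fin 2` into a function on all qubits. -/
def glue {ι : Type} [Fintype ι] [DecidableEq ι] (A : Finset ι)
    (u : {x // x ∈ A} → Fin 2) (w : {x // x ∈ Aᶜ} → Fin 2) : ι → Fin 2 :=
  fun x => if h : x ∈ A then u ⟨x, h⟩ else w ⟨x, Finset.mem_compl.mpr h⟩

/-- The reduced matrix on the qubits in `A`, obtained by tracing out `Aᶜ`;
`Tr_B ρ = reduceTo Bᶜ ρ`. -/
noncomputable def reduceTo {ι : Type} [Fintype ι] [DecidableEq ι] (A : Finset ι)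
    (ρ : QMat ι) : QMat {x // x ∈ A} :=
  fun u v => ∑ w : {x // x ∈ Aᶜ} → Fin 2, ρ (glue A u w) (glue A v w)

/-- The Kronecker product of a state on `A` and a state on `Aᶜ`, with the tensor
factors placed back at their original qubit positions. -/
def boxProd {ι : Type} [Fintype ι] [DecidableEq ι] (A : Finset ι)
    (σ₁ : QMat {x // x ∈ A}) (σ₂ : QMat {x // x ∈ Aᶜ}) : QMat ι :=
  fun x y =>
    σ₁ (fun a => x a.1) (fun a => y a.1) * σ₂ (fun b => x b.1) (fun b => y b.1)

/-- The cumulative correlation measure (CCM), defined recursively: it vanishes on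
one-qubit states, and otherwise is the minimum over all bipartitions `(A, Aᶜ)` of
`2^(N-2) * D(ρ, ρ_A ⊠ ρ_{Aᶜ}) + C(ρ_A) + C(ρ_{Aᶜ})`. -/
noncomputable def CCM (D : ∀ (κ : Type) [Fintype κ] [DecidableEq κ], QMat κ → QMat κ → ℝ)
    (ι : Type) [Fintype ι] [DecidableEq ι] (ρ : QMat ι) : ℝ :=
  if Fintype.card ι ≤ 1 then 0
  else
    sInf { r : ℝ |
      ∃ A : {A : Finset ι // A.Nonempty ∧ Aᶜ.Nonempty},
        r = (2 : ℝ) ^ (Fintype.card ι - 2) *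
              D ι ρ (boxProd A.1 (reduceTo A.1 ρ) (reduceTo (A.1 : Finset ι)ᶜ ρ)) +
            CCM D {x // x ∈ A.1} (reduceTo A.1 ρ) +
            CCM D {x // x ∈ (A.1 : Finset ι)ᶜ} (reduceTo (A.1 : Finset ι)ᶜ ρ) }
termination_by Fintype.card ι
decreasing_by
  · have hA : (A.1 : Finset ι) ≠ Finset.univ := by
      intro h
      rcases A.2.2 with ⟨x, hx⟩
      rw [h] at hx
      simp at hx
    calc Fintype.card {x // x ∈ A.1} = (A.1 : Finset ι).card := Fintype.card_coe _
      _ < Fintype.card ι := (Finset.card_lt_iff_ne_univ _).mpr hA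
  · have hA : ((A.1 : Finset ι)ᶜ : Finset ι) ≠ Finset.univ :=
      (Finset.compl_ne_univ_iff_nonempty _).mpr A.2.1
    calc Fintype.card {x // x ∈ (A.1 : Finset ι)ᶜ} = ((A.1 : Finset ι)ᶜ).card :=
        Fintype.card_coe _
      _ < Fintype.card ι := (Finset.card_lt_iff_ne_univ _).mpr hA
/-- The product Kraus operator `E_f = ⊗_j K j (f j)` acting on all qubits. -/
def krausProd {ι : Type} [Fintype ι] (m : ι → ℕ)
    (K : ∀ j : ι, Fin (m j) → Matrix (Fin 2) (Fin 2) ℂ) (f : ∀ j, Fin (m j)) :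
    Matrix (ι → Fin 2) (ι → Fin 2) ℂ :=
  fun x y => ∏ j, K j (f j) (x j) (y j)

/-- The local quantum operation `ε = ε¹ ⊗ ⋯ ⊗ εᴺ` determined by single-qubit
Kraus operators `K j i` on each qubit `j`. -/
noncomputable def applyLocalKraus {ι : Type} [Fintype ι] [DecidableEq ι] (m : ι → ℕ)
    (K : ∀ j : ι, Fin (m j) → Matrix (Fin 2) (Fin 2) ℂ) (ρ : QMat ι) : QMat ι :=
  ∑ f : ∀ j, Fin (m j), krausProd m K f * ρ * (krausProd m K f)ᴴ

/-- The axioms required of the distance `D`: nonnegativity and `D(ρ,ρ) = 0`,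
invariance under unitary conjugation, contractivity under local quantum
operations, and monotonicity under partial traces. -/
structure DistanceAxioms
    (D : ∀ (κ : Type) [Fintype κ] [DecidableEq κ], QMat κ → QMat κ → ℝ) : Prop where
  nonneg : ∀ (ι : Type) [Fintype ι] [DecidableEq ι] (ρ σ : QMat ι),
    IsState ρ → IsState σ → 0 ≤ D ι ρ σ
  self_eq_zero : ∀ (ι : Type) [Fintype ι] [DecidableEq ι] (ρ : QMat ι),
    IsState ρ → D ι ρ ρ = 0
  unitary_invariance : ∀ (ι : Type) [Fintype ι] [DecidableEq ι]
      (U : Matrix (ι → Fin 2) (ι → Fin 2) ℂ), U * Uᴴ = 1 → Uᴴ * U = 1 →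
      ∀ ρ σ : QMat ι, IsState ρ → IsState σ →
        D ι (U * ρ * Uᴴ) (U * σ * Uᴴ) = D ι ρ σ
  contractivity : ∀ (ι : Type) [Fintype ι] [DecidableEq ι]
      (m : ι → ℕ) (K : ∀ j : ι, Fin (m j) → Matrix (Fin 2) (Fin 2) ℂ),
      (∀ j, ∑ i, (K j i)ᴴ * K j i = 1) →
      ∀ ρ σ : QMat ι, IsState ρ → IsState σ →
        D ι (applyLocalKraus m K ρ) (applyLocalKraus m K σ) ≤ D ι ρ σ
  monotonicity : ∀ (ι : Type) [Fintype ι] [DecidableEq ι] (B : Finset ι)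
      (ρ σ : QMat ι), IsState ρ → IsState σ →
        D {x // x ∈ Bᶜ} (reduceTo Bᶜ ρ) (reduceTo Bᶜ σ) ≤ D ι ρ σ

/-- The Kronecker product of multi-qubit states, on the disjoint union of the
qubit index sets. -/
def kron {ι κ : Type} (φ : QMat ι) (ψ : QMat κ) : QMat (ι ⊕ κ) :=
  fun x y =>
    φ (fun i => x (Sum.inl i)) (fun i => y (Sum.inl i)) *
      ψ (fun j => x (Sum.inr j)) (fun j => y (Sum.inr j))

set_option linter.unusedSectionVars false
set_option maxHeartbeats 1000000

section Aux
variable {ι : Type} [Fintype ι] [DecidableEq ι] {A : Finset ι}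

lemma glue_resA (u : {x // x ∈ A} → Fin 2) (w : {x // x ∈ Aᶜ} → Fin 2) :
    (fun a : {x // x ∈ A} => glue A u w a.1) = u := by
  funext a; simp [glue, a.2]

lemma glue_resB (u : {x // x ∈ A} → Fin 2) (w : {x // x ∈ Aᶜ} → Fin 2) :
    (fun b : {x // x ∈ Aᶜ} => glue A u w b.1) = w := by
  funext b
  have hb : ¬ b.1 ∈ A := Finset.mem_compl.mp b.2
  simp [glue, hb]

lemma glue_self (x : ι → Fin 2) :
    glue A (fun a => x a.1) (fun b => x b.1) = x := by
  funext j; by_cases h : j ∈ A <;> simp [glue, h]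

/-- The equivalence between pairs of partial assignments and full assignments. -/
def glueEquiv (A : Finset ι) :
    (({x // x ∈ A} → Fin 2) × ({x // x ∈ Aᶜ} → Fin 2)) ≃ (ι → Fin 2) where
  toFun p := glue A p.1 p.2
  invFun x := (fun a => x a.1, fun b => x b.1)
  left_inv p := by simp [glue_resA, glue_resB]
  right_inv x := glue_self x

lemma reduceTo_eq_sum (ρ : QMat ι) :
    reduceTo A ρ = ∑ w : {x // x ∈ Aᶜ} → Fin 2,
      ρ.submatrix (fun u => glue A u w) (fun v => glue A v w) := by
  ext u v
  simp [reduceTo, Matrix.sum_apply, Matrix.submatrix_apply]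

lemma posSemidef_reduceTo {ρ : QMat ι} (hρ : ρ.PosSemidef) :
    (reduceTo A ρ).PosSemidef := by
  rw [reduceTo_eq_sum]
  exact Finset.sum_induction _ _ (fun a b ha hb => ha.add hb) Matrix.PosSemidef.zero
    fun w _ => hρ.submatrix _

lemma trace_reduceTo (ρ : QMat ι) : (reduceTo A ρ).trace = ρ.trace := by
  simp only [Matrix.trace, Matrix.diag, reduceTo]
  rw [← Equiv.sum_comp (glueEquiv A) (fun x => ρ x x), Fintype.sum_prod_type]
  rfl

lemma isState_reduceTo {ρ : QMat ι} (hρ : IsState ρ) : IsState (reduceTo A ρ) :=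
  ⟨posSemidef_reduceTo hρ.1, by rw [trace_reduceTo, hρ.2]⟩

lemma trace_boxProd (σ₁ : QMat {x // x ∈ A}) (σ₂ : QMat {x // x ∈ Aᶜ}) :
    (boxProd A σ₁ σ₂).trace = σ₁.trace * σ₂.trace := by
  simp only [Matrix.trace, Matrix.diag]
  rw [← Equiv.sum_comp (glueEquiv A) (fun x => boxProd A σ₁ σ₂ x x),
    Fintype.sum_prod_type, Finset.sum_mul_sum]
  refine Finset.sum_congr rfl fun u _ => Finset.sum_congr rfl fun w _ => ?_
  simp only [glueEquiv, Equiv.coe_fn_mk, boxProd, glue_resA, glue_resB]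

lemma boxProd_mul' (M₁ N₁ : QMat {x // x ∈ A}) (M₂ N₂ : QMat {x // x ∈ Aᶜ}) :
    boxProd A M₁ M₂ * boxProd A N₁ N₂ = boxProd A (M₁ * N₁) (M₂ * N₂) := by
  ext x y
  simp only [Matrix.mul_apply, boxProd]
  rw [← Equiv.sum_comp (glueEquiv A), Fintype.sum_prod_type]
  simp only [glueEquiv, Equiv.coe_fn_mk, glue_resA, glue_resB]
  rw [Finset.sum_mul_sum]
  exact Finset.sum_congr rfl fun s _ => Finset.sum_congr rfl fun t _ => by ring

lemma boxProd_conjTranspose (M : QMat {x // x ∈ A}) (N : QMat {x // x ∈ Aᶜ}) :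
    (boxProd A M N)ᴴ = boxProd A Mᴴ Nᴴ := by
  ext x y
  simp only [Matrix.conjTranspose_apply, boxProd, star_mul']

open scoped MatrixOrder Matrix.Norms.L2Operator in
lemma posSemidef_boxProd {σ₁ : QMat {x // x ∈ A}} {σ₂ : QMat {x // x ∈ Aᶜ}}
    (h₁ : σ₁.PosSemidef) (h₂ : σ₂.PosSemidef) : (boxProd A σ₁ σ₂).PosSemidef := by
  obtain ⟨B₁, rfl⟩ := CStarAlgebra.nonneg_iff_eq_star_mul_self.mp h₁.nonneg
  obtain ⟨B₂, rfl⟩ := CStarAlgebra.nonneg_iff_eq_star_mul_self.mp h₂.nonneg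
  rw [Matrix.star_eq_conjTranspose, Matrix.star_eq_conjTranspose,← boxProd_mul', ← boxProd_conjTranspose]
  exact Matrix.posSemidef_conjTranspose_mul_self _

lemma isState_boxProd {σ₁ : QMat {x // x ∈ A}} {σ₂ : QMat {x // x ∈ Aᶜ}}
    (h₁ : IsState σ₁) (h₂ : IsState σ₂) : IsState (boxProd A σ₁ σ₂) :=
  ⟨posSemidef_boxProd h₁.1 h₂.1, by rw [trace_boxProd, h₁.2, h₂.2, one_mul]⟩

lemma isState_conj {ρ : QMat ι} (hρ : IsState ρ) {U : QMat ι}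
    (hU2 : Uᴴ * U = 1) : IsState (U * ρ * Uᴴ) := by
  refine ⟨hρ.1.mul_mul_conjTranspose_same U, ?_⟩
  rw [Matrix.trace_mul_cycle, hU2, Matrix.one_mul, hρ.2]

/-- The product matrix `⊗ⱼ Ms j`. -/
def prodMat {ι : Type} [Fintype ι] (Ms : ι → Matrix (Fin 2) (Fin 2) ℂ) : QMat ι :=
  fun x y => ∏ j, Ms j (x j) (y j)

lemma prodMat_mul (Ms Ns : ι → Matrix (Fin 2) (Fin 2) ℂ) :
    prodMat Ms * prodMat Ns = prodMat (fun j => Ms j * Ns j) := by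
  ext x y
  simp only [Matrix.mul_apply, prodMat]
  rw [Fintype.prod_sum fun j a => Ms j (x j) a * Ns j a (y j)]
  exact Finset.sum_congr rfl fun z _ => by rw [← Finset.prod_mul_distrib]

lemma prodMat_conjTranspose (Ms : ι → Matrix (Fin 2) (Fin 2) ℂ) :
    (prodMat Ms)ᴴ = prodMat (fun j => (Ms j)ᴴ) := by
  ext x y
  simp only [Matrix.conjTranspose_apply, prodMat, Matrix.conjTranspose_apply]
  rw [star_prod]

lemma prodMat_one : prodMat (fun _ : ι => (1 : Matrix (Fin 2) (Fin 2) ℂ)) = 1 := by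
  ext x y
  simp only [prodMat, Matrix.one_apply]
  by_cases h : x = y
  · subst h; simp
  · have : ∃ j, x j ≠ y j := by
      by_contra hc
      push_neg at hc
      exact h (funext hc)
    obtain ⟨j, hj⟩ := this
    rw [if_neg h]
    exact Finset.prod_eq_zero (Finset.mem_univ j) (by simp [Matrix.one_apply, hj])

lemma prodMat_conj_one (Ks : ι → Matrix (Fin 2) (Fin 2) ℂ)
    (h : ∀ j, (Ks j)ᴴ * Ks j = 1) : (prodMat Ks)ᴴ * prodMat Ks = 1 := by
  rw [prodMat_conjTranspose, prodMat_mul]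
  have h2 : (fun j => (Ks j)ᴴ * Ks j) = fun _ => 1 := funext h
  rw [h2, prodMat_one]

lemma prodMat_mul_conj_one (Ks : ι → Matrix (Fin 2) (Fin 2) ℂ)
    (h : ∀ j, Ks j * (Ks j)ᴴ = 1) : prodMat Ks * (prodMat Ks)ᴴ = 1 := by
  rw [prodMat_conjTranspose, prodMat_mul]
  have h2 : (fun j => Ks j * (Ks j)ᴴ) = fun _ => 1 := funext h
  rw [h2, prodMat_one]

lemma prodMat_eq_boxProd (Ms : ι → Matrix (Fin 2) (Fin 2) ℂ) :
    prodMat Ms = boxProd A (prodMat fun a => Ms a.1) (prodMat fun b => Ms b.1) := by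
  ext x y
  simp only [prodMat, boxProd]
  rw [← Finset.prod_mul_prod_compl A (fun j => Ms j (x j) (y j)),
    ← Finset.prod_coe_sort A, ← Finset.prod_coe_sort Aᶜ]

lemma reduceTo_conj (Us : ι → Matrix (Fin 2) (Fin 2) ℂ)
    (hUs : ∀ j, (Us j)ᴴ * Us j = 1) (ρ : QMat ι) :
    reduceTo A (prodMat Us * ρ * (prodMat Us)ᴴ)
      = prodMat (fun a : {x // x ∈ A} => Us a.1) * reduceTo A ρ *
          (prodMat (fun a : {x // x ∈ A} => Us a.1))ᴴ := by
  classical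
  set UA := prodMat (fun a : {x // x ∈ A} => Us a.1) with hUAdef
  set UB := prodMat (fun b : {x // x ∈ Aᶜ} => Us b.1) with hUBdef
  have hUBu : UBᴴ * UB = 1 := prodMat_conj_one _ fun b => hUs b.1
  have hX : prodMat Us = boxProd A UA UB := prodMat_eq_boxProd Us
  rw [hX, boxProd_conjTranspose]
  ext u v
  have expand : ∀ (x y : ι → Fin 2),
      (boxProd A UA UB * ρ * boxProd A UAᴴ UBᴴ) x y
        = ∑ p : ({x // x ∈ A} → Fin 2) × ({x // x ∈ Aᶜ} → Fin 2),
            ∑ q : ({x // x ∈ A} → Fin 2) × ({x // x ∈ Aᶜ} → Fin 2),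
              (UA (fun a => x a.1) p.1 * UB (fun b => x b.1) p.2) *
                ρ (glue A p.1 p.2) (glue A q.1 q.2) *
                (UAᴴ q.1 (fun a => y a.1) * UBᴴ q.2 (fun b => y b.1)) := by
    intro x y
    rw [Finset.sum_comm]
    rw [Matrix.mul_apply]
    rw [← Equiv.sum_comp (glueEquiv A)
      (fun z => (boxProd A UA UB * ρ) x z * boxProd A UAᴴ UBᴴ z y)]
    refine Finset.sum_congr rfl fun q _ => ?_
    rw [Matrix.mul_apply, Finset.sum_mul]
    rw [← Equiv.sum_comp (glueEquiv A)
      (fun z => boxProd A UA UB x z * ρ z (glueEquiv A q) * boxProd A UAᴴ UBᴴ (glueEquiv A q) y)]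
    refine Finset.sum_congr rfl fun p _ => ?_
    simp only [glueEquiv, Equiv.coe_fn_mk, boxProd, glue_resA, glue_resB]
  show ∑ w, (boxProd A UA UB * ρ * boxProd A UAᴴ UBᴴ) (glue A u w) (glue A v w) = _
  have lhs1 : ∑ w, (boxProd A UA UB * ρ * boxProd A UAᴴ UBᴴ) (glue A u w) (glue A v w)
      = ∑ p : ({x // x ∈ A} → Fin 2) × ({x // x ∈ Aᶜ} → Fin 2),
          ∑ q : ({x // x ∈ A} → Fin 2) × ({x // x ∈ Aᶜ} → Fin 2),
            ∑ w : {x // x ∈ Aᶜ} → Fin 2,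
              (UA u p.1 * UB w p.2) * ρ (glue A p.1 p.2) (glue A q.1 q.2) *
                (UAᴴ q.1 v * UBᴴ q.2 w) := by
    simp only [expand, glue_resA, glue_resB]
    rw [Finset.sum_comm]
    exact Finset.sum_congr rfl fun p _ => Finset.sum_comm
  rw [lhs1]
  have key : ∀ t t' : {x // x ∈ Aᶜ} → Fin 2,
      (∑ w, UB w t * UBᴴ t' w) = if t' = t then 1 else 0 := by
    intro t t'
    have h1 := congrArg (fun M => M t' t) hUBu
    simp only [Matrix.mul_apply, Matrix.conjTranspose_apply, Matrix.one_apply] at h1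
    rw [← h1]
    exact Finset.sum_congr rfl fun w _ => mul_comm _ _
  have lhs2 : ∀ p : ({x // x ∈ A} → Fin 2) × ({x // x ∈ Aᶜ} → Fin 2),
      (∑ q : ({x // x ∈ A} → Fin 2) × ({x // x ∈ Aᶜ} → Fin 2),
        ∑ w : {x // x ∈ Aᶜ} → Fin 2,
          (UA u p.1 * UB w p.2) * ρ (glue A p.1 p.2) (glue A q.1 q.2) *
            (UAᴴ q.1 v * UBᴴ q.2 w))
      = ∑ s' : {x // x ∈ A} → Fin 2,
          UA u p.1 * ρ (glue A p.1 p.2) (glue A s' p.2) * UAᴴ s' v := by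
    intro p
    rw [Fintype.sum_prod_type]
    have inner : ∀ (s' : {x // x ∈ A} → Fin 2) (t' : {x // x ∈ Aᶜ} → Fin 2),
        (∑ w, (UA u p.1 * UB w p.2) * ρ (glue A p.1 p.2) (glue A s' t') *
          (UAᴴ s' v * UBᴴ t' w))
        = (UA u p.1 * ρ (glue A p.1 p.2) (glue A s' t') * UAᴴ s' v) *
            (∑ w, UB w p.2 * UBᴴ t' w) := by
      intro s' t'
      rw [Finset.mul_sum]
      exact Finset.sum_congr rfl fun w _ => by ring
    simp only [inner, key]
    refine Finset.sum_congr rfl fun s' _ => ?_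
    simp
  simp only [lhs2]
  rw [Fintype.sum_prod_type]
  rw [Matrix.mul_apply]
  have rhs : ∀ s' : {x // x ∈ A} → Fin 2, (UA * reduceTo A ρ) u s' * UAᴴ s' v
      = ∑ s, ∑ t, UA u s * ρ (glue A s t) (glue A s' t) * UAᴴ s' v := by
    intro s'
    rw [Matrix.mul_apply, Finset.sum_mul]
    refine Finset.sum_congr rfl fun s _ => ?_
    show (UA u s * ∑ t, ρ (glue A s t) (glue A s' t)) * UAᴴ s' v = _
    rw [Finset.mul_sum, Finset.sum_mul]
  simp only [rhs]
  conv_rhs => rw [Finset.sum_comm]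
  exact Finset.sum_congr rfl fun s _ => Finset.sum_comm

end Aux

theorem ccm_conj (D : ∀ (κ : Type) [Fintype κ] [DecidableEq κ], QMat κ → QMat κ → ℝ)
    (hD : DistanceAxioms D) (ι : Type) [Fintype ι] [DecidableEq ι]
    (Us : ι → Matrix (Fin 2) (Fin 2) ℂ)
    (hUs : ∀ j, Us j * (Us j)ᴴ = 1 ∧ (Us j)ᴴ * Us j = 1)
    (ρ : QMat ι) (hρ : IsState ρ) :
    CCM D ι (prodMat Us * ρ * (prodMat Us)ᴴ) = CCM D ι ρ := by
  have hU1 : prodMat Us * (prodMat Us)ᴴ = 1 := prodMat_mul_conj_one _ fun j => (hUs j).1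
  have hU2 : (prodMat Us)ᴴ * prodMat Us = 1 := prodMat_conj_one _ fun j => (hUs j).2
  rw [CCM, CCM]
  by_cases hcard : Fintype.card ι ≤ 1
  · rw [if_pos hcard, if_pos hcard]
  · rw [if_neg hcard, if_neg hcard]
    refine congrArg sInf ?_
    have hAeq : ∀ A : {A : Finset ι // A.Nonempty ∧ Aᶜ.Nonempty},
        (2 : ℝ) ^ (Fintype.card ι - 2) *
            D ι (prodMat Us * ρ * (prodMat Us)ᴴ)
              (boxProd A.1 (reduceTo A.1 (prodMat Us * ρ * (prodMat Us)ᴴ))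
                (reduceTo (A.1 : Finset ι)ᶜ (prodMat Us * ρ * (prodMat Us)ᴴ))) +
          CCM D {x // x ∈ A.1} (reduceTo A.1 (prodMat Us * ρ * (prodMat Us)ᴴ)) +
          CCM D {x // x ∈ (A.1 : Finset ι)ᶜ}
            (reduceTo (A.1 : Finset ι)ᶜ (prodMat Us * ρ * (prodMat Us)ᴴ)) =
        (2 : ℝ) ^ (Fintype.card ι - 2) *
            D ι ρ (boxProd A.1 (reduceTo A.1 ρ) (reduceTo (A.1 : Finset ι)ᶜ ρ)) +
          CCM D {x // x ∈ A.1} (reduceTo A.1 ρ) +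
          CCM D {x // x ∈ (A.1 : Finset ι)ᶜ} (reduceTo (A.1 : Finset ι)ᶜ ρ) := by
      intro A
      have hredA : reduceTo A.1 (prodMat Us * ρ * (prodMat Us)ᴴ)
          = prodMat (fun a : {x // x ∈ A.1} => Us a.1) * reduceTo A.1 ρ *
              (prodMat (fun a : {x // x ∈ A.1} => Us a.1))ᴴ :=
        reduceTo_conj Us (fun j => (hUs j).2) ρ
      have hredB : reduceTo (A.1 : Finset ι)ᶜ (prodMat Us * ρ * (prodMat Us)ᴴ)
          = prodMat (fun b : {x // x ∈ (A.1 : Finset ι)ᶜ} => Us b.1) *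
              reduceTo (A.1 : Finset ι)ᶜ ρ *
              (prodMat (fun b : {x // x ∈ (A.1 : Finset ι)ᶜ} => Us b.1))ᴴ :=
        reduceTo_conj Us (fun j => (hUs j).2) ρ
      have hbox : boxProd A.1 (reduceTo A.1 (prodMat Us * ρ * (prodMat Us)ᴴ))
            (reduceTo (A.1 : Finset ι)ᶜ (prodMat Us * ρ * (prodMat Us)ᴴ))
          = prodMat Us *
              boxProd A.1 (reduceTo A.1 ρ) (reduceTo (A.1 : Finset ι)ᶜ ρ) *
              (prodMat Us)ᴴ := by
        rw [hredA, hredB, ← boxProd_mul', ← boxProd_mul', ← boxProd_conjTranspose,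
          ← prodMat_eq_boxProd]
      have hDeq : D ι (prodMat Us * ρ * (prodMat Us)ᴴ)
            (boxProd A.1 (reduceTo A.1 (prodMat Us * ρ * (prodMat Us)ᴴ))
              (reduceTo (A.1 : Finset ι)ᶜ (prodMat Us * ρ * (prodMat Us)ᴴ)))
          = D ι ρ (boxProd A.1 (reduceTo A.1 ρ) (reduceTo (A.1 : Finset ι)ᶜ ρ)) := by
        rw [hbox]
        exact hD.unitary_invariance ι (prodMat Us) hU1 hU2 ρ _ hρ
          (isState_boxProd (isState_reduceTo hρ) (isState_reduceTo hρ))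
      have hC1 : CCM D {x // x ∈ A.1} (reduceTo A.1 (prodMat Us * ρ * (prodMat Us)ᴴ))
          = CCM D {x // x ∈ A.1} (reduceTo A.1 ρ) := by
        rw [hredA]
        exact ccm_conj D hD {x // x ∈ A.1} (fun a => Us a.1)
          (fun a => hUs a.1) (reduceTo A.1 ρ) (isState_reduceTo hρ)
      have hC2 : CCM D {x // x ∈ (A.1 : Finset ι)ᶜ}
            (reduceTo (A.1 : Finset ι)ᶜ (prodMat Us * ρ * (prodMat Us)ᴴ))
          = CCM D {x // x ∈ (A.1 : Finset ι)ᶜ} (reduceTo (A.1 : Finset ι)ᶜ ρ) := by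
        rw [hredB]
        exact ccm_conj D hD {x // x ∈ (A.1 : Finset ι)ᶜ} (fun b => Us b.1)
          (fun b => hUs b.1) (reduceTo (A.1 : Finset ι)ᶜ ρ) (isState_reduceTo hρ)
      rw [hDeq, hC1, hC2]
    ext r
    simp only [Set.mem_setOf_eq]
    exact exists_congr fun A => by rw [hAeq A]
termination_by Fintype.card ι
decreasing_by
  · have hA : (A.1 : Finset ι) ≠ Finset.univ := by
      intro h
      rcases A.2.2 with ⟨x, hx⟩
      rw [h] at hx
      simp at hx
    calc Fintype.card {x // x ∈ A.1} = (A.1 : Finset ι).card := Fintype.card_coe _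
      _ < Fintype.card ι := (Finset.card_lt_iff_ne_univ _).mpr hA
  · have hA : ((A.1 : Finset ι)ᶜ : Finset ι) ≠ Finset.univ :=
      (Finset.compl_ne_univ_iff_nonempty _).mpr A.2.1
    calc Fintype.card {x // x ∈ (A.1 : Finset ι)ᶜ} = ((A.1 : Finset ι)ᶜ).card :=
        Fintype.card_coe _
      _ < Fintype.card ι := (Finset.card_lt_iff_ne_univ _).mpr hA

/-- CCM is invariant under local unitary transformations: if
`U(x,y) = ∏ j, Uʲ(x j, y j)` with each `Uʲ` a `2 × 2` unitary matrix, then for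
every `N`-qubit state `ρ`, `C(U ρ U†) = C(ρ)`. -/
theorem ccm_local_unitary_invariant
    (D : ∀ (κ : Type) [Fintype κ] [DecidableEq κ], QMat κ → QMat κ → ℝ)
    (hD : DistanceAxioms D)
    (N : ℕ) (hN : 1 ≤ N)
    (Us : Fin N → Matrix (Fin 2) (Fin 2) ℂ)
    (hUs : ∀ j, Us j * (Us j)ᴴ = 1 ∧ (Us j)ᴴ * Us j = 1)
    (U : QMat (Fin N)) (hU : ∀ x y, U x y = ∏ j, Us j (x j) (y j))
    (ρ : QMat (Fin N)) (hρ : IsState ρ) :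
    CCM D (Fin N) (U * ρ * Uᴴ) = CCM D (Fin N) ρ := by
  have hUeq : U = prodMat Us := by
    ext x y
    rw [hU]
    rfl
  rw [hUeq]
  exact ccm_conj D hD (Fin N) Us hUs ρ hρ
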